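/- Call Brascamp–Lieb data (H, p) simple if dim H = Σⱼ (dim Hⱼ)/pⱼ, dim V ≤ Σⱼ (dim πⱼV)/pⱼ for all subspaces V ≤ H, and moreover strict inequality holds for every nonzero proper subspace V of H. If all pⱼ ∈ (1,∞) and (H, p) is simple, then (H^⊥, p') is simple, where pⱼ' is the conjugate exponent of pⱼ. -/

import Mathlib

open Module

section Aux

open RealInnerProductSpace

variable {m : ℕ} {E : Fin m → Type*}
    [∀ j, NormedAddCommGroup (E j)] [∀ j, InnerProductSpace ℝ (E j)]
    [∀ j, FiniteDimensional ℝ (E j)]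

lemma finrank_iInf_comap (S : ∀ j, Submodule ℝ (E j)) :
    finrank ℝ (⨅ j, (S j).comap (PiLp.projₗ 2 E j) : Submodule ℝ (PiLp 2 E))
      = ∑ j, finrank ℝ (S j) := by
  have e : (⨅ j, (S j).comap (PiLp.projₗ 2 E j) : Submodule ℝ (PiLp 2 E)) ≃ₗ[ℝ] (∀ j, S j) :=
    { toFun := fun x j => ⟨x.1 j, by
        have hx := x.2
        rw [Submodule.mem_iInf] at hx
        exact hx j⟩
      map_add' := fun x y => rfl
      map_smul' := fun c x => rfl
      invFun := fun v => ⟨(WithLp.equiv 2 _).symm (fun j => (v j : E j)), by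
        rw [Submodule.mem_iInf]; intro j; exact (v j).2⟩
      left_inv := fun x => rfl
      right_inv := fun v => rfl }
  rw [e.finrank_eq, Module.finrank_pi_fintype]

-- key geometric/arithmetic lemma: given W ≤ Hᗮ, produce V ≤ H with the two estimates
lemma key_estimates (H : Submodule ℝ (PiLp 2 E)) (W : Submodule ℝ (PiLp 2 E)) (hW : W ≤ Hᗮ) :
    ∃ V : Submodule ℝ (PiLp 2 E), V ≤ H ∧
      (∀ j, V.map (PiLp.projₗ 2 E j) ≤ (W.map (PiLp.projₗ 2 E j))ᗮ) ∧
      ((finrank ℝ W : ℝ) ≤ (finrank ℝ V : ℝ) - (finrank ℝ H : ℝ)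
          + ∑ j, (finrank ℝ (W.map (PiLp.projₗ 2 E j)) : ℝ)) ∧
      ((H ⊓ (⨅ j, ((W.map (PiLp.projₗ 2 E j))ᗮ).comap (PiLp.projₗ 2 E j))) = V) := by
  set π := fun j => (PiLp.projₗ 2 E j : PiLp 2 E →ₗ[ℝ] E j) with hπ
  set K : Submodule ℝ (PiLp 2 E) := ⨅ j, ((W.map (π j))ᗮ).comap (π j) with hK
  set V : Submodule ℝ (PiLp 2 E) := H ⊓ K with hV
  have hmemK : ∀ x ∈ K, ∀ j, x j ∈ (W.map (π j))ᗮ := by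
    intro x hx j
    rw [hK, Submodule.mem_iInf] at hx
    exact hx j
  -- inner product of elements of K and W vanishes
  have hKW : ∀ k ∈ K, ∀ w ∈ W, ⟪k, w⟫ = 0 := by
    intro k hk w hw
    rw [PiLp.inner_apply]
    refine Finset.sum_eq_zero fun j _ => ?_
    have h1 : w j ∈ W.map (π j) := ⟨w, hw, rfl⟩
    have := (Submodule.mem_orthogonal _ _).1 (hmemK k hk j) (w j) h1
    rw [real_inner_comm] at this
    exact this
  have hdisj : K ⊓ W = ⊥ := by
    rw [Submodule.eq_bot_iff]
    intro x ⟨hxK, hxW⟩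
    exact inner_self_eq_zero.1 (hKW x hxK x hxW)
  have habsorb : H ⊓ (K ⊔ W) = V := by
    rw [hV]
    refine le_antisymm ?_ (inf_le_inf_left H le_sup_left)
    rintro x ⟨hxH, hxKW⟩
    obtain ⟨k, hk, w, hw, rfl⟩ := Submodule.mem_sup.1 hxKW
    have h1 : ⟪k + w, w⟫ = 0 := (Submodule.mem_orthogonal H w).1 (hW hw) _ hxH
    have h2 : ⟪k, w⟫ = 0 := hKW k hk w hw
    have h3 : ⟪k + w, w⟫ = ⟪k, w⟫ + ⟪w, w⟫ := inner_add_left _ _ _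
    have hw0 : w = 0 := by
      have : ⟪w, w⟫ = (0:ℝ) := by rw [h3, h2, zero_add] at h1; exact h1
      exact inner_self_eq_zero.1 this
    rw [hw0, add_zero] at hxH ⊢
    exact ⟨hxH, hk⟩
  refine ⟨V, inf_le_left, ?_, ?_, rfl⟩
  · intro j
    rw [Submodule.map_le_iff_le_comap]
    exact le_trans inf_le_right (iInf_le _ j)
  -- the dimension count
  have hKrank : finrank ℝ K = ∑ j, finrank ℝ ((W.map (π j))ᗮ) :=
    finrank_iInf_comap _
  have hsup : finrank ℝ (K ⊔ W : Submodule ℝ (PiLp 2 E)) = finrank ℝ K + finrank ℝ W := by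
    have := Submodule.finrank_sup_add_finrank_inf_eq K W
    rw [hdisj, finrank_bot, add_zero] at this
    exact this
  have hmain : finrank ℝ H + finrank ℝ (K ⊔ W : Submodule ℝ (PiLp 2 E))
      ≤ finrank ℝ V + finrank ℝ (PiLp 2 E) := by
    have h1 := Submodule.finrank_sup_add_finrank_inf_eq H (K ⊔ W)
    have h2 : finrank ℝ (H ⊔ (K ⊔ W) : Submodule ℝ (PiLp 2 E)) ≤ finrank ℝ (PiLp 2 E) :=
      Submodule.finrank_le _
    rw [habsorb] at h1
    omega
  -- orthogonal complement dims in each factor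
  have horth : ∀ j, (finrank ℝ ((W.map (π j))ᗮ) : ℝ)
      = (finrank ℝ (E j) : ℝ) - (finrank ℝ (W.map (π j)) : ℝ) := by
    intro j
    have := Submodule.finrank_add_finrank_orthogonal (W.map (π j))
    push_cast [← this]
    ring
  have hN : (finrank ℝ (PiLp 2 E) : ℝ) = ∑ j, (finrank ℝ (E j) : ℝ) := by
    rw [(WithLp.linearEquiv 2 ℝ (∀ j, E j)).finrank_eq, Module.finrank_pi_fintype]
    push_cast; rfl
  have hKrankR : (finrank ℝ K : ℝ)
      = ∑ j, ((finrank ℝ (E j) : ℝ) - (finrank ℝ (W.map (π j)) : ℝ)) := by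
    rw [hKrank]; push_cast; exact Finset.sum_congr rfl fun j _ => horth j
  have hmainR : (finrank ℝ H : ℝ) + (finrank ℝ K : ℝ) + (finrank ℝ W : ℝ)
      ≤ (finrank ℝ V : ℝ) + (finrank ℝ (PiLp 2 E) : ℝ) := by
    rw [hsup] at hmain
    have h := (Nat.cast_le (α := ℝ)).2 hmain
    push_cast at h
    linarith
  have hsum : ∑ j, ((finrank ℝ (E j) : ℝ) - (finrank ℝ (W.map (π j)) : ℝ))
      = (∑ j, (finrank ℝ (E j) : ℝ)) - ∑ j, (finrank ℝ (W.map (π j)) : ℝ) :=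
    Finset.sum_sub_distrib _ _
  rw [hKrankR, hsum, hN] at hmainR
  linarith

lemma key_estimates2 (H : Submodule ℝ (PiLp 2 E)) (p : Fin m → ℝ) (hp0 : ∀ j, 0 < p j)
    (h1 : (finrank ℝ H : ℝ) = ∑ j, (finrank ℝ (E j) : ℝ) / p j)
    (W : Submodule ℝ (PiLp 2 E)) (hW : W ≤ Hᗮ) :
    ∃ V : Submodule ℝ (PiLp 2 E), V ≤ H ∧
      ((finrank ℝ W : ℝ) ≤ (finrank ℝ V : ℝ) - (finrank ℝ H : ℝ)
          + ∑ j, (finrank ℝ (W.map (PiLp.projₗ 2 E j)) : ℝ)) ∧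
      (∑ j, (finrank ℝ (V.map (PiLp.projₗ 2 E j)) : ℝ) / p j
          ≤ (finrank ℝ H : ℝ) - ∑ j, (finrank ℝ (W.map (PiLp.projₗ 2 E j)) : ℝ) / p j) ∧
      ((H ⊓ (⨅ j, ((W.map (PiLp.projₗ 2 E j))ᗮ).comap (PiLp.projₗ 2 E j))) = V) := by
  obtain ⟨V, hVH, hVK, hest, hVdef⟩ := key_estimates H W hW
  refine ⟨V, hVH, hest, ?_, hVdef⟩
  have hterm : ∀ j, (finrank ℝ (V.map (PiLp.projₗ 2 E j)) : ℝ) / p j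
      ≤ ((finrank ℝ (E j) : ℝ) - (finrank ℝ (W.map (PiLp.projₗ 2 E j)) : ℝ)) / p j := by
    intro j
    have horth := Submodule.finrank_add_finrank_orthogonal (W.map (PiLp.projₗ 2 E j))
    have hmono : finrank ℝ (V.map (PiLp.projₗ 2 E j))
        ≤ finrank ℝ ((W.map (PiLp.projₗ 2 E j))ᗮ) := Submodule.finrank_mono (hVK j)
    have : (finrank ℝ (V.map (PiLp.projₗ 2 E j)) : ℝ)
        ≤ (finrank ℝ (E j) : ℝ) - (finrank ℝ (W.map (PiLp.projₗ 2 E j)) : ℝ) := by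
      have h := (Nat.cast_le (α := ℝ)).2 hmono
      have h2 := congrArg (Nat.cast (R := ℝ)) horth
      push_cast at h h2
      linarith
    exact div_le_div_of_nonneg_right this (hp0 j).le
  calc ∑ j, (finrank ℝ (V.map (PiLp.projₗ 2 E j)) : ℝ) / p j
      ≤ ∑ j, ((finrank ℝ (E j) : ℝ) - (finrank ℝ (W.map (PiLp.projₗ 2 E j)) : ℝ)) / p j :=
        Finset.sum_le_sum fun j _ => hterm j
    _ = (finrank ℝ H : ℝ) - ∑ j, (finrank ℝ (W.map (PiLp.projₗ 2 E j)) : ℝ) / p j := by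
        rw [h1, ← Finset.sum_sub_distrib]
        exact Finset.sum_congr rfl fun j _ => sub_div _ _ _

end Aux

/-- Brascamp–Lieb data `(H, p)` (with finite exponents) is *simple* if the scaling condition
holds, the dimension condition holds for all subspaces of `H`, and the dimension inequality is
strict for every nonzero proper subspace of `H`. -/
def BLSimple {m : ℕ} {E : Fin m → Type*}
    [∀ j, NormedAddCommGroup (E j)] [∀ j, InnerProductSpace ℝ (E j)]
    [∀ j, FiniteDimensional ℝ (E j)]
    (H : Submodule ℝ (PiLp 2 E)) (p : Fin m → ℝ) : Prop :=
  ((finrank ℝ H : ℝ) = ∑ j, (finrank ℝ (E j) : ℝ) / p j) ∧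
  (∀ V ≤ H, (finrank ℝ V : ℝ)
      ≤ ∑ j, (finrank ℝ (V.map (PiLp.projₗ 2 E j)) : ℝ) / p j) ∧
  (∀ V ≤ H, V ≠ ⊥ → V ≠ H → (finrank ℝ V : ℝ)
      < ∑ j, (finrank ℝ (V.map (PiLp.projₗ 2 E j)) : ℝ) / p j)

/-- If all `pⱼ ∈ (1,∞)` and `(H, p)` is simple, then the dual data
`(Hᗮ, p')` is simple. -/
theorem dual_simple {m : ℕ} {E : Fin m → Type*}
    [∀ j, NormedAddCommGroup (E j)] [∀ j, InnerProductSpace ℝ (E j)]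
    [∀ j, FiniteDimensional ℝ (E j)]
    (H : Submodule ℝ (PiLp 2 E)) (p q : Fin m → ℝ)
    (hp : ∀ j, 1 < p j)
    (hq : ∀ j, 1 / p j + 1 / q j = 1)
    (hsimple : BLSimple H p) :
    BLSimple Hᗮ q := by
  obtain ⟨h1, h2, h3⟩ := hsimple
  have hp0 : ∀ j, 0 < p j := fun j => lt_trans one_pos (hp j)
  have hqinv : ∀ j, 1 / q j = 1 - 1 / p j := fun j => by linarith [hq j]
  have hq0 : ∀ j, 0 < q j := by
    intro j
    have h1p : 1 / p j < 1 := by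
      rw [div_lt_one (hp0 j)]; exact hp j
    have : 0 < 1 / q j := by rw [hqinv j]; linarith
    exact one_div_pos.1 this
  have hqp : ∀ (c : ℝ) (j : Fin m), c / q j = c - c / p j := by
    intro c j
    rw [div_eq_mul_one_div c (q j), hqinv j, mul_sub, mul_one, ← div_eq_mul_one_div]
  have hsumq : ∀ c : Fin m → ℝ, ∑ j, c j / q j = (∑ j, c j) - ∑ j, c j / p j := by
    intro c
    rw [← Finset.sum_sub_distrib]
    exact Finset.sum_congr rfl fun j _ => hqp (c j) j
  have hN : (finrank ℝ (PiLp 2 E) : ℝ) = ∑ j, (finrank ℝ (E j) : ℝ) := by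
    rw [(WithLp.linearEquiv 2 ℝ (∀ j, E j)).finrank_eq, Module.finrank_pi_fintype]
    push_cast; rfl
  have hHperp : (finrank ℝ Hᗮ : ℝ) = (finrank ℝ (PiLp 2 E) : ℝ) - (finrank ℝ H : ℝ) := by
    have := Submodule.finrank_add_finrank_orthogonal H
    have h := congrArg (Nat.cast (R := ℝ)) this
    push_cast at h
    linarith
  -- Part 1
  have part1 : (finrank ℝ Hᗮ : ℝ) = ∑ j, (finrank ℝ (E j) : ℝ) / q j := by
    rw [hsumq, hHperp, hN, h1]
  refine ⟨part1, ?_, ?_⟩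
  · -- Part 2
    intro W hW
    obtain ⟨V, hVH, hest, hBC, -⟩ := key_estimates2 H p hp0 h1 W hW
    have hAB := h2 V hVH
    rw [hsumq]
    linarith
  · -- Part 3
    intro W hW hWbot hWtop
    obtain ⟨V, hVH, hest, hBC, -⟩ := key_estimates2 H p hp0 h1 W hW
    have hAB := h2 V hVH
    rw [hsumq]
    by_cases hVeqH : V = H
    · -- then all projections of W are trivial, contradicting W ≠ ⊥
      exfalso
      apply hWbot
      have hsum0 : ∑ j, (finrank ℝ (W.map (PiLp.projₗ 2 E j)) : ℝ) / p j ≤ 0 := by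
        rw [hVeqH] at hAB hBC
        linarith
      have hnn : ∀ j ∈ Finset.univ, (0:ℝ) ≤ (finrank ℝ (W.map (PiLp.projₗ 2 E j)) : ℝ) / p j :=
        fun j _ => div_nonneg (Nat.cast_nonneg _) (hp0 j).le
      have hzero : ∀ j ∈ Finset.univ, (finrank ℝ (W.map (PiLp.projₗ 2 E j)) : ℝ) / p j = 0 := by
        rw [← Finset.sum_eq_zero_iff_of_nonneg hnn]
        exact le_antisymm hsum0 (Finset.sum_nonneg hnn)
      have hbot : ∀ j, W.map (PiLp.projₗ 2 E j) = ⊥ := by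
        intro j
        have := hzero j (Finset.mem_univ j)
        rw [div_eq_zero_iff] at this
        rcases this with h | h
        · exact Submodule.finrank_eq_zero.1 (by exact_mod_cast h)
        · exact absurd h (ne_of_gt (hp0 j))
      rw [Submodule.eq_bot_iff]
      intro w hw
      have hwj : ∀ j, w j = 0 := by
        intro j
        have : (PiLp.projₗ 2 E j : PiLp 2 E →ₗ[ℝ] E j) w ∈ W.map (PiLp.projₗ 2 E j) :=
          Submodule.mem_map_of_mem hw
        rw [hbot j] at this
        exact this
      ext j
      exact hwj j
    · by_cases hVbot : V = ⊥
      · -- V = ⊥ case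
        have hV0 : (finrank ℝ V : ℝ) = 0 := by rw [hVbot, finrank_bot]; norm_num
        have hle : ∑ j, (finrank ℝ (W.map (PiLp.projₗ 2 E j)) : ℝ) / p j ≤ (finrank ℝ H : ℝ) := by
          rw [h1]
          refine Finset.sum_le_sum fun j _ => ?_
          exact div_le_div_of_nonneg_right
            (by exact_mod_cast (Nat.cast_le (α := ℝ)).2 (Submodule.finrank_le _)) (hp0 j).le
        rcases eq_or_lt_of_le hle with heq | hlt
        · -- all projections are full
          have hR : ∑ j, (finrank ℝ (W.map (PiLp.projₗ 2 E j)) : ℝ) / p j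
              = ∑ j, (finrank ℝ (E j) : ℝ) / p j := by rw [heq, h1]
          have hnn : ∀ j ∈ Finset.univ, (0:ℝ) ≤ (finrank ℝ (E j) : ℝ) / p j
              - (finrank ℝ (W.map (PiLp.projₗ 2 E j)) : ℝ) / p j := by
            intro j _
            have : (finrank ℝ (W.map (PiLp.projₗ 2 E j)) : ℝ) ≤ (finrank ℝ (E j) : ℝ) :=
              by exact_mod_cast (Nat.cast_le (α := ℝ)).2 (Submodule.finrank_le _)
            have := div_le_div_of_nonneg_right this (hp0 j).le
            linarith
          have hzero : ∀ j ∈ Finset.univ, (finrank ℝ (E j) : ℝ) / p j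
              - (finrank ℝ (W.map (PiLp.projₗ 2 E j)) : ℝ) / p j = 0 := by
            rw [← Finset.sum_eq_zero_iff_of_nonneg hnn]
            rw [Finset.sum_sub_distrib, hR]
            ring
          have hfull : ∀ j, (finrank ℝ (W.map (PiLp.projₗ 2 E j)) : ℝ) = (finrank ℝ (E j) : ℝ) := by
            intro j
            have h := hzero j (Finset.mem_univ j)
            rw [div_sub_div_same] at h
            rw [div_eq_zero_iff] at h
            rcases h with h | h
            · linarith
            · exact absurd h (ne_of_gt (hp0 j))
          have hWlt : (finrank ℝ W : ℝ) < (finrank ℝ Hᗮ : ℝ) := by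
            exact_mod_cast Submodule.finrank_lt_finrank_of_lt (lt_of_le_of_ne hW hWtop)
          have hRq : (∑ j, (finrank ℝ (W.map (PiLp.projₗ 2 E j)) : ℝ))
              - ∑ j, (finrank ℝ (W.map (PiLp.projₗ 2 E j)) : ℝ) / p j
              = (finrank ℝ Hᗮ : ℝ) := by
            have e1 : ∑ j, (finrank ℝ (W.map (PiLp.projₗ 2 E j)) : ℝ)
                = ∑ j, (finrank ℝ (E j) : ℝ) := Finset.sum_congr rfl fun j _ => hfull j
            have e2 : ∑ j, (finrank ℝ (W.map (PiLp.projₗ 2 E j)) : ℝ) / p j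
                = ∑ j, (finrank ℝ (E j) : ℝ) / p j :=
              Finset.sum_congr rfl fun j _ => by rw [hfull j]
            rw [part1, hsumq]
            linarith
          linarith
        · linarith
      · -- generic case: strict inequality from simplicity of H
        have hstrict := h3 V hVH hVbot hVeqH
        linarith
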